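/- The Taylor series identity arccos(x) = π/2 − Σ_{l=0}^∞ ((2l−1)!!/(2l)!!) · x^{2l+1}/(2l+1) holds for all x ∈ [−1, 1]. -/

import Mathlib

open Real
open scoped Nat

section ArccosTaylorAux
open Filter Finset Set Topology

namespace ArccosTaylorAux

noncomputable def c (l : ℕ) : ℝ := ((2 * l - 1)‼ : ℝ) / ((2 * l)‼ : ℝ)

lemma c_pos (l : ℕ) : 0 < c l :=
  div_pos (by exact_mod_cast Nat.doubleFactorial_pos _)
    (by exact_mod_cast Nat.doubleFactorial_pos _)

lemma c_zero : c 0 = 1 := by simp [c, Nat.doubleFactorial]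

lemma c_succ (l : ℕ) : c (l + 1) = c l * (2 * l + 1) / (2 * l + 2) := by
  unfold c
  have h1 : 2 * (l + 1) - 1 = 2 * l + 1 := by omega
  have h2 : 2 * (l + 1) = 2 * l + 2 := by omega
  rw [h1, h2]
  have e1 : (2 * l + 1)‼ = (2 * l + 1) * (2 * l - 1)‼ := Nat.doubleFactorial_add_one (2 * l)
  have e2 : (2 * l + 2)‼ = (2 * l + 2) * (2 * l)‼ := Nat.doubleFactorial_add_two (2 * l)
  rw [e1, e2]
  have h0 : ((2 * l)‼ : ℝ) ≠ 0 := by exact_mod_cast (Nat.doubleFactorial_pos _).ne'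
  push_cast
  field_simp

lemma c_sq (l : ℕ) : c l ^ 2 * (2 * (l : ℝ) + 1) ≤ 1 := by
  induction l with
  | zero => simp [c_zero]
  | succ n ih =>
    have h1 : (0 : ℝ) < 2 * (n : ℝ) + 2 := by positivity
    have key : c (n + 1) ^ 2 * (2 * ((n : ℝ) + 1) + 1)
        = (c n ^ 2 * (2 * (n : ℝ) + 1)) * ((2 * (n : ℝ) + 1) * (2 * n + 3) / (2 * n + 2) ^ 2) := by
      rw [c_succ]
      field_simp
      ring
    push_cast
    rw [key]
    have hle : (2 * (n : ℝ) + 1) * (2 * n + 3) / (2 * n + 2) ^ 2 ≤ 1 := by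
      rw [div_le_one (by positivity)]; nlinarith [sq_nonneg ((n : ℝ))]
    have hpos : 0 ≤ c n ^ 2 * (2 * (n : ℝ) + 1) := by positivity
    have hpos2 : 0 ≤ (2 * (n : ℝ) + 1) * (2 * n + 3) / (2 * n + 2) ^ 2 := by positivity
    nlinarith

lemma c_le_one (l : ℕ) : c l ≤ 1 := by
  nlinarith [c_pos l, c_sq l, sq_nonneg (c l)]

lemma c_le_inv_sqrt (l : ℕ) : c l ≤ 1 / Real.sqrt (2 * (l : ℝ) + 1) := by
  have ht : (0 : ℝ) < 2 * (l : ℝ) + 1 := by positivity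
  rw [le_div_iff₀ (Real.sqrt_pos.2 ht)]
  have h := Real.sq_sqrt ht.le
  nlinarith [c_pos l, c_sq l, Real.sqrt_nonneg (2 * (l : ℝ) + 1),
    Real.sqrt_pos.2 ht]

lemma summable_u : Summable (fun l : ℕ => c l / (2 * (l : ℝ) + 1)) := by
  rw [← summable_nat_add_iff 1]
  have hs : Summable (fun n : ℕ => (1 : ℝ) / (n : ℝ) ^ ((3 : ℝ) / 2)) :=
    Real.summable_one_div_nat_rpow.2 (by norm_num)
  have hs' : Summable (fun n : ℕ => (1 : ℝ) / ((n : ℝ) + 1) ^ ((3 : ℝ) / 2)) := by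
    have := (summable_nat_add_iff 1).2 hs
    simpa using this
  refine hs'.of_nonneg_of_le (fun l => div_nonneg (c_pos _).le (by positivity)) (fun l => ?_)
  set m : ℕ := l + 1
  have hm : (1 : ℝ) ≤ (m : ℝ) := by exact_mod_cast Nat.one_le_iff_ne_zero.2 (by omega)
  set t : ℝ := 2 * (m : ℝ) + 1 with ht_def
  have ht0 : (0 : ℝ) < t := by positivity
  have hmt : (m : ℝ) ≤ t := by simp only [ht_def]; nlinarith
  have hm0 : (0 : ℝ) < (m : ℝ) := by linarith
  have hrw : ((m : ℝ)) ^ ((3 : ℝ) / 2) = (m : ℝ) * Real.sqrt (m : ℝ) := by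
    have : ((3 : ℝ) / 2) = 1 + 1 / 2 := by norm_num
    rw [this, Real.rpow_add hm0, Real.rpow_one, ← Real.sqrt_eq_rpow]
  have key : (m : ℝ) * Real.sqrt (m : ℝ) ≤ t * Real.sqrt t := by
    have := Real.sqrt_le_sqrt hmt
    nlinarith [Real.sqrt_nonneg (m : ℝ), Real.sqrt_nonneg t]
  have hcle := c_le_inv_sqrt m
  have hml : ((l : ℝ) + 1) = (m : ℝ) := by push_cast [m]; ring
  have hcast : (2 * ((m : ℕ) : ℝ) + 1) = t := rfl
  rw [hml, hrw]
  have hst : (0 : ℝ) < Real.sqrt t := Real.sqrt_pos.2 ht0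
  calc c m / t ≤ (1 / Real.sqrt t) / t := by gcongr
    _ = 1 / (t * Real.sqrt t) := by field_simp
    _ ≤ 1 / ((m : ℝ) * Real.sqrt (m : ℝ)) :=
        one_div_le_one_div_of_le (by positivity) key

/-- the sum function of the even series -/
noncomputable def S (y : ℝ) : ℝ := ∑' l : ℕ, c l * y ^ (2 * l)

/-- the termwise derivative of the even series -/
noncomputable def D (y : ℝ) : ℝ := ∑' l : ℕ, c l * (2 * (l : ℝ)) * y ^ (2 * l - 1)

lemma summable_g {y : ℝ} (hy : |y| < 1) : Summable (fun l : ℕ => c l * y ^ (2 * l)) := by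
  refine Summable.of_norm_bounded (g := fun l : ℕ => (y ^ 2) ^ l) ?_ (fun l => ?_)
  · apply summable_geometric_of_lt_one (by positivity)
    nlinarith [abs_nonneg y, sq_abs y]
  · have : ‖c l * y ^ (2 * l)‖ = c l * |y| ^ (2 * l) := by
      rw [norm_mul, norm_pow, Real.norm_eq_abs, Real.norm_eq_abs, abs_of_pos (c_pos l)]
    rw [this, pow_mul, ← sq_abs y]
    exact mul_le_of_le_one_left (by positivity) (c_le_one l)

lemma summable_two_mul_pow {r : ℝ} (h0 : 0 ≤ r) (h1 : r < 1) :
    Summable (fun l : ℕ => 2 * (l : ℝ) * r ^ (2 * l - 1)) := by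
  rcases eq_or_lt_of_le h0 with h | h
  · apply Summable.of_norm_bounded_eventually_nat (g := fun _ => 0) summable_zero
    filter_upwards [eventually_gt_atTop 0] with l hl
    have hexp : (2 * l - 1 : ℕ) ≠ 0 := by omega
    simp [← h, zero_pow hexp]
  · have h2 : ‖r ^ 2‖ < 1 := by
      rw [Real.norm_eq_abs, abs_of_nonneg (by positivity)]
      nlinarith
    have hs : Summable (fun l : ℕ => (l : ℝ) * (r ^ 2) ^ l) := by
      have h3 := summable_pow_mul_geometric_of_norm_lt_one (R := ℝ) 1 h2
      exact h3.congr (fun l => by rw [pow_one])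
    refine (hs.mul_left (2 / r)).congr (fun l => ?_)
    rcases Nat.eq_zero_or_pos l with rfl | hl
    · simp
    · have hexp : 2 * l - 1 + 1 = 2 * l := by omega
      have hy2 : (r ^ 2) ^ l = r ^ (2 * l - 1) * r := by
        rw [← pow_mul, ← pow_succ, hexp]
      rw [hy2]
      field_simp

lemma summable_g' {y : ℝ} (hy : |y| < 1) :
    Summable (fun l : ℕ => c l * (2 * (l : ℝ)) * y ^ (2 * l - 1)) := by
  have hgeom : Summable (fun l : ℕ => (2 * (l : ℝ)) * |y| ^ (2 * l - 1)) :=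
    summable_two_mul_pow (abs_nonneg y) hy
  refine Summable.of_norm_bounded hgeom (fun l => ?_)
  rw [Real.norm_eq_abs, abs_mul, abs_mul, abs_pow]
  rw [abs_of_pos (c_pos l), abs_of_nonneg (by positivity : (0:ℝ) ≤ 2 * (l:ℝ))]
  exact mul_le_mul_of_nonneg_right
    (mul_le_of_le_one_left (by positivity) (c_le_one l)) (by positivity)

lemma hasDerivAt_S {t : ℝ} (ht : |t| < 1) : HasDerivAt S (D t) t := by
  set r : ℝ := (|t| + 1) / 2 with hr
  have hr0 : 0 < r := by positivity
  have hr1 : r < 1 := by rw [hr]; linarith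
  have htr : |t| < r := by rw [hr]; linarith
  have key : HasDerivAt (fun y => ∑' l : ℕ, c l * y ^ (2 * l))
      (∑' l : ℕ, c l * (2 * (l : ℝ)) * t ^ (2 * l - 1)) t := by
    refine hasDerivAt_tsum_of_isPreconnected (summable_two_mul_pow hr0.le hr1)
      (isOpen_Ioo (a := -r) (b := r)) (isPreconnected_Ioo)
      (g := fun l y => c l * y ^ (2 * l))
      (g' := fun l y => c l * (2 * (l : ℝ)) * y ^ (2 * l - 1))
      (y₀ := 0) (fun l y _ => ?_) (fun l y hy => ?_) ?_ ?_ ?_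
    · have h := (hasDerivAt_pow (2 * l) y).const_mul (c l)
      refine h.congr_deriv ?_
      push_cast
      ring
    · have hyr : |y| < r := abs_lt.2 ⟨by linarith [hy.1], by linarith [hy.2]⟩
      rw [Real.norm_eq_abs, abs_mul, abs_pow]
      have h1 : |c l * (2 * (l : ℝ))| ≤ 2 * (l : ℝ) := by
        rw [abs_mul, abs_of_pos (c_pos l), abs_of_nonneg (by positivity : (0:ℝ) ≤ 2 * (l:ℝ))]
        exact mul_le_of_le_one_left (by positivity) (c_le_one l)
      have h2 : |y| ^ (2 * l - 1) ≤ r ^ (2 * l - 1) :=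
        pow_le_pow_left₀ (abs_nonneg y) hyr.le _
      exact mul_le_mul h1 h2 (by positivity) (by positivity)
    · exact mem_Ioo.2 ⟨by linarith, by linarith⟩
    · exact summable_g (by simp)
    · exact mem_Ioo.2 ⟨by linarith [neg_abs_le t, abs_nonneg t], by linarith [le_abs_self t]⟩
  exact key

lemma ode {t : ℝ} (ht : |t| < 1) : (1 - t ^ 2) * D t = t * S t := by
  have hg' : HasSum (fun l : ℕ => c l * (2 * (l : ℝ)) * t ^ (2 * l - 1)) (D t) :=
    (summable_g' ht).hasSum
  have hgs : HasSum (fun l : ℕ => c l * t ^ (2 * l)) (S t) := (summable_g ht).hasSum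
  have hC := (hg'.mul_left (1 - t ^ 2)).sub (hgs.mul_left t)
  set b : ℕ → ℝ := fun l => c l * (2 * (l : ℝ)) * t ^ (2 * l - 1) with hb
  have key : ∀ l : ℕ, (1 - t ^ 2) * (c l * (2 * (l : ℝ)) * t ^ (2 * l - 1))
      - t * (c l * t ^ (2 * l)) = b l - b (l + 1) := by
    intro l
    cases l with
    | zero =>
      have h1 : c 1 = 1 / 2 := by rw [c_succ 0, c_zero]; norm_num
      simp [hb, c_zero, h1]
      try ring
    | succ n =>
      have e1 : 2 * (n + 1) - 1 = 2 * n + 1 := by omega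
      have e2 : 2 * (n + 1) = 2 * n + 2 := by omega
      have e3 : 2 * (n + 2) - 1 = 2 * n + 3 := by omega
      have hc2 := c_succ (n + 1)
      simp only [hb, e1, e2, e3]
      rw [hc2]
      have h2 : (0:ℝ) < 2 * ((n:ℝ) + 1) + 2 := by positivity
      push_cast
      field_simp
      ring
  have hfun : (fun l : ℕ => (1 - t ^ 2) * (c l * (2 * (l : ℝ)) * t ^ (2 * l - 1))
      - t * (c l * t ^ (2 * l))) = fun l => b l - b (l + 1) := funext key
  rw [hfun] at hC
  have htend := hC.tendsto_sum_nat
  have hps : ∀ n : ℕ, ∑ l ∈ range n, (b l - b (l + 1)) = b 0 - b n :=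
    fun n => Finset.sum_range_sub' b n
  have hb0 : b 0 = 0 := by simp [hb]
  have hbz : Tendsto b atTop (𝓝 0) := (summable_g' ht).tendsto_atTop_zero
  have htend2 : Tendsto (fun n : ℕ => ∑ l ∈ range n, (b l - b (l + 1))) atTop (𝓝 0) := by
    simp only [hps, hb0, zero_sub]
    simpa using hbz.neg
  have := tendsto_nhds_unique htend htend2
  linarith [this]

lemma S_zero : S 0 = 1 := by
  have h : HasSum (fun l : ℕ => c l * (0:ℝ) ^ (2 * l)) (c 0 * (0:ℝ) ^ (2 * 0)) := by
    apply hasSum_single 0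
    intro l hl
    have : 2 * l ≠ 0 := by omega
    simp [zero_pow this]
  have := h.tsum_eq
  simp only [S, this]
  simp [c_zero]

lemma S_eq {t : ℝ} (ht : |t| < 1) : S t = 1 / Real.sqrt (1 - t ^ 2) := by
  have h1t : (0:ℝ) < 1 - t ^ 2 := by nlinarith [abs_nonneg t, sq_abs t]
  set G : ℝ → ℝ := fun y => S y * Real.sqrt (1 - y ^ 2) with hG
  have hGderiv : ∀ y ∈ Ioo (-1 : ℝ) 1, HasDerivWithinAt G 0 (Ioo (-1:ℝ) 1) y := by
    intro y hy
    have hy1 : |y| < 1 := abs_lt.2 ⟨hy.1, hy.2⟩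
    have h1y : (0:ℝ) < 1 - y ^ 2 := by nlinarith [abs_nonneg y, sq_abs y]
    have hs0 : Real.sqrt (1 - y ^ 2) ≠ 0 := (Real.sqrt_pos.2 h1y).ne'
    have hinner : HasDerivAt (fun z : ℝ => 1 - z ^ 2) (-(2 * y)) y := by
      have := (hasDerivAt_pow 2 y).const_sub 1
      refine this.congr_deriv ?_
      push_cast
      ring
    have hsqrt : HasDerivAt (fun z : ℝ => Real.sqrt (1 - z ^ 2)) (-y / Real.sqrt (1 - y ^ 2)) y := by
      have h := (Real.hasDerivAt_sqrt h1y.ne').comp y hinner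
      refine h.congr_deriv ?_
      field_simp
    have hmul := (hasDerivAt_S hy1).mul hsqrt
    have hval : D y * Real.sqrt (1 - y ^ 2) + S y * (-y / Real.sqrt (1 - y ^ 2)) = 0 := by
      have hode := ode hy1
      have hsq : Real.sqrt (1 - y ^ 2) * Real.sqrt (1 - y ^ 2) = 1 - y ^ 2 :=
        Real.mul_self_sqrt h1y.le
      have key2 : D y * Real.sqrt (1 - y ^ 2) * Real.sqrt (1 - y ^ 2) = S y * y := by
        rw [mul_assoc, hsq]; linarith [hode]
      field_simp
      linarith [key2]
    rw [hval] at hmul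
    exact hmul.hasDerivWithinAt
  have hconst : ∀ y ∈ Ioo (-1:ℝ) 1, G y = G 0 := by
    intro y hy
    have h0mem : (0:ℝ) ∈ Ioo (-1:ℝ) 1 := by norm_num
    have := Convex.norm_image_sub_le_of_norm_hasDerivWithin_le
      (f := G) (f' := fun _ => 0) (C := 0)
      (fun z hz => hGderiv z hz) (fun z _ => by simp) (convex_Ioo _ _) h0mem hy
    have h2 : ‖G y - G 0‖ ≤ 0 := by simpa using this
    have := norm_le_zero_iff.1 h2
    linarith [sub_eq_zero.1 this]
  have hGt : G t = 1 := by
    have := hconst t (mem_Ioo.2 ⟨by linarith [neg_abs_le t], by linarith [le_abs_self t]⟩)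
    rw [this, hG]
    simp [S_zero]
  have hs0 : Real.sqrt (1 - t ^ 2) ≠ 0 := (Real.sqrt_pos.2 h1t).ne'
  rw [hG] at hGt
  rw [eq_div_iff hs0]
  exact hGt

lemma hasSum_g {t : ℝ} (ht : |t| < 1) :
    HasSum (fun l : ℕ => c l * t ^ (2 * l)) (1 / Real.sqrt (1 - t ^ 2)) := by
  have := (summable_g ht).hasSum
  rwa [show (∑' l : ℕ, c l * t ^ (2 * l)) = S t from rfl, S_eq ht] at this

noncomputable def F (y : ℝ) : ℝ := ∑' l : ℕ, c l * y ^ (2 * l + 1) / (2 * (l : ℝ) + 1)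

lemma term_bound {l : ℕ} {y : ℝ} (hy : |y| ≤ 1) :
    ‖c l * y ^ (2 * l + 1) / (2 * (l : ℝ) + 1)‖ ≤ c l / (2 * (l : ℝ) + 1) := by
  have hd : (0:ℝ) < 2 * (l : ℝ) + 1 := by positivity
  rw [norm_div, norm_mul, norm_pow, Real.norm_eq_abs, Real.norm_eq_abs, Real.norm_eq_abs,
    abs_of_pos (c_pos l), abs_of_pos hd]
  have h1 : c l * |y| ^ (2 * l + 1) ≤ c l := by
    calc c l * |y| ^ (2 * l + 1) ≤ c l * 1 :=
          mul_le_mul_of_nonneg_left (pow_le_one₀ (abs_nonneg y) hy) (c_pos l).le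
      _ = c l := mul_one _
  exact (div_le_div_iff_of_pos_right hd).2 h1

lemma summable_f {y : ℝ} (hy : |y| ≤ 1) :
    Summable (fun l : ℕ => c l * y ^ (2 * l + 1) / (2 * (l : ℝ) + 1)) :=
  Summable.of_norm_bounded summable_u (fun l => term_bound hy)

lemma hasDerivAt_F {x : ℝ} (hx : |x| < 1) :
    HasDerivAt F (1 / Real.sqrt (1 - x ^ 2)) x := by
  set r : ℝ := (|x| + 1) / 2 with hr
  have hr0 : 0 < r := by positivity
  have hr1 : r < 1 := by rw [hr]; linarith
  have hxr : |x| < r := by rw [hr]; linarith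
  have hsum : Summable (fun l : ℕ => (r ^ 2) ^ l) := by
    apply summable_geometric_of_lt_one (by positivity)
    nlinarith
  have key : HasDerivAt (fun y => ∑' l : ℕ, c l * y ^ (2 * l + 1) / (2 * (l : ℝ) + 1))
      (∑' l : ℕ, c l * x ^ (2 * l)) x := by
    refine hasDerivAt_tsum_of_isPreconnected hsum
      (isOpen_Ioo (a := -r) (b := r)) (isPreconnected_Ioo)
      (g := fun l y => c l * y ^ (2 * l + 1) / (2 * (l : ℝ) + 1))
      (g' := fun l y => c l * y ^ (2 * l))
      (y₀ := 0) (fun l y _ => ?_) (fun l y hy => ?_) ?_ ?_ ?_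
    · have hd : (0:ℝ) < 2 * (l : ℝ) + 1 := by positivity
      have h := ((hasDerivAt_pow (2 * l + 1) y).const_mul (c l)).div_const (2 * (l : ℝ) + 1)
      refine h.congr_deriv ?_
      have he : 2 * l + 1 - 1 = 2 * l := by omega
      rw [he]
      push_cast
      field_simp
    · have hyr : |y| < r := abs_lt.2 ⟨by linarith [hy.1], by linarith [hy.2]⟩
      rw [Real.norm_eq_abs, abs_mul, abs_pow, abs_of_pos (c_pos l)]
      calc c l * |y| ^ (2 * l) ≤ 1 * r ^ (2 * l) := by
            apply mul_le_mul (c_le_one l) (pow_le_pow_left₀ (abs_nonneg y) hyr.le _)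
              (by positivity) (by norm_num)
        _ = (r ^ 2) ^ l := by rw [one_mul, ← pow_mul, mul_comm 2 l, pow_mul]
    · exact mem_Ioo.2 ⟨by linarith, by linarith⟩
    · apply summable_zero.congr
      intro l
      simp
    · exact mem_Ioo.2 ⟨by linarith [neg_abs_le x, abs_nonneg x], by linarith [le_abs_self x]⟩
  have heq : (∑' l : ℕ, c l * x ^ (2 * l)) = 1 / Real.sqrt (1 - x ^ 2) := (hasSum_g hx).tsum_eq
  rw [heq] at key
  exact key

lemma F_zero : F 0 = 0 := by
  simp only [F]
  convert tsum_zero with l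
  simp

lemma F_eq_arcsin_Ioo {x : ℝ} (hx : |x| < 1) : F x = Real.arcsin x := by
  set H : ℝ → ℝ := fun y => F y - Real.arcsin y with hH
  have hderiv : ∀ y ∈ Ioo (-1:ℝ) 1, HasDerivWithinAt H 0 (Ioo (-1:ℝ) 1) y := by
    intro y hy
    have hy1 : |y| < 1 := abs_lt.2 ⟨hy.1, hy.2⟩
    have h1 : y ≠ -1 := by intro h; rw [h] at hy1; simp at hy1
    have h2 : y ≠ 1 := by intro h; rw [h] at hy1; simp at hy1
    have := (hasDerivAt_F hy1).sub (Real.hasDerivAt_arcsin h1 h2)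
    have h' := this.hasDerivWithinAt (s := Ioo (-1:ℝ) 1)
    rw [sub_self] at h'
    exact h'
  have h0mem : (0:ℝ) ∈ Ioo (-1:ℝ) 1 := by norm_num
  have hxmem : x ∈ Ioo (-1:ℝ) 1 := ⟨by linarith [neg_abs_le x], by linarith [le_abs_self x]⟩
  have hb := Convex.norm_image_sub_le_of_norm_hasDerivWithin_le
    (f := H) (f' := fun _ => 0) (C := 0) hderiv (fun z _ => by simp) (convex_Ioo _ _) h0mem hxmem
  have h2 : ‖H x - H 0‖ ≤ 0 := by simpa using hb
  have h3 : H x = H 0 := sub_eq_zero.1 (norm_le_zero_iff.1 h2)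
  have h4 : H 0 = 0 := by simp [hH, F_zero]
  have := h3.trans h4
  simpa [hH, sub_eq_zero] using this

lemma F_continuousOn : ContinuousOn F (Icc (-1:ℝ) 1) := by
  apply continuousOn_tsum (u := fun l : ℕ => c l / (2 * (l : ℝ) + 1))
    (fun l => Continuous.continuousOn (by continuity)) summable_u
  intro l y hy
  exact term_bound (abs_le.2 ⟨hy.1, hy.2⟩)

lemma F_eq_arcsin {x : ℝ} (hx : x ∈ Icc (-1:ℝ) 1) : F x = Real.arcsin x := by
  rcases lt_or_eq_of_le (abs_le.2 ⟨hx.1, hx.2⟩) with h | h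
  · exact F_eq_arcsin_Ioo h
  · have hne : (𝓝[Ioo (-1:ℝ) 1] x).NeBot := by
      rw [← mem_closure_iff_nhdsWithin_neBot, closure_Ioo (by norm_num : (-1:ℝ) ≠ 1)]
      exact hx
    have h1 : Tendsto F (𝓝[Ioo (-1:ℝ) 1] x) (𝓝 (F x)) :=
      (F_continuousOn x hx).mono Ioo_subset_Icc_self
    have h2 : Tendsto F (𝓝[Ioo (-1:ℝ) 1] x) (𝓝 (Real.arcsin x)) := by
      have harc : Tendsto Real.arcsin (𝓝[Ioo (-1:ℝ) 1] x) (𝓝 (Real.arcsin x)) :=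
        (Real.continuous_arcsin.tendsto x).mono_left nhdsWithin_le_nhds
      refine harc.congr' ?_
      filter_upwards [eventually_mem_nhdsWithin] with y hy
      exact (F_eq_arcsin_Ioo (abs_lt.2 ⟨hy.1, hy.2⟩)).symm
    exact tendsto_nhds_unique h1 h2

end ArccosTaylorAux
end ArccosTaylorAux

/-- Taylor series of arccos: arccos x = π/2 − Σ_{l≥0} ((2l−1)!!/(2l)!!) x^{2l+1}/(2l+1), |x| ≤ 1. -/
theorem arccos_taylor_series (x : ℝ) (hx : x ∈ Set.Icc (-1 : ℝ) 1) :
    HasSum (fun l : ℕ => ((2 * l - 1)‼ : ℝ) / ((2 * l)‼ : ℝ) * x ^ (2 * l + 1) / (2 * l + 1))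
      (π / 2 - arccos x) := by
  have hax : |x| ≤ 1 := abs_le.2 ⟨hx.1, hx.2⟩
  have hsum : HasSum (fun l : ℕ => ArccosTaylorAux.c l * x ^ (2 * l + 1) / (2 * (l : ℝ) + 1))
      (Real.arcsin x) := by
    refine (ArccosTaylorAux.summable_f hax).hasSum_iff.2 ?_
    exact ArccosTaylorAux.F_eq_arcsin hx
  have harc : π / 2 - Real.arccos x = Real.arcsin x := by rw [Real.arccos]; ring
  rw [harc]
  exact hsum
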